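/- In the ILT model, for distinct nodes x, y of G_t with clones x', y' in G_{t+1}: if xy is not an edge of G_t then d_{t+1}(x', y') = d_t(x, y), and if xy is an edge of G_t then d_{t+1}(x', y') = 2 = d_t(x,y) + 1. -/

import Mathlib

open SimpleGraph Finset

universe u
variable {V : Type u}

/-- One step of the Iterated Local Transitivity model: every vertex `x` gets a
clone `Sum.inr x` joined to `x` and all of its neighbours; old vertices are `Sum.inl`. -/
def ILTstep (G : SimpleGraph V) : SimpleGraph (V ⊕ V) where
  Adj a b := match a, b with
    | Sum.inl x, Sum.inl y => G.Adj x y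
    | Sum.inl x, Sum.inr y => x = y ∨ G.Adj x y
    | Sum.inr x, Sum.inl y => x = y ∨ G.Adj x y
    | Sum.inr _, Sum.inr _ => False
  symm := by
    constructor
    rintro (x | x) (y | y) h
    · exact G.adj_symm h
    · exact h.imp Eq.symm (fun hh => G.adj_symm hh)
    · exact h.imp Eq.symm (fun hh => G.adj_symm hh)
    · exact h.elim
  loopless := by
    constructor
    rintro (x | x) h
    · exact G.irrefl h
    · exact h

instance ILTstepDecAdj (G : SimpleGraph V) [DecidableEq V] [DecidableRel G.Adj] :
    DecidableRel (ILTstep G).Adj := fun a b =>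
  match a, b with
  | Sum.inl x, Sum.inl y => inferInstanceAs (Decidable (G.Adj x y))
  | Sum.inl x, Sum.inr y => inferInstanceAs (Decidable (x = y ∨ G.Adj x y))
  | Sum.inr x, Sum.inl y => inferInstanceAs (Decidable (x = y ∨ G.Adj x y))
  | Sum.inr _, Sum.inr _ => inferInstanceAs (Decidable False)

/-- The vertex set of the ILT model at time `t`. -/
def ILTV (V : Type u) : ℕ → Type u
  | 0 => V
  | t + 1 => ILTV V t ⊕ ILTV V t

/-- The graph of the ILT model at time `t`, starting from `G`. -/
def ILTG (G : SimpleGraph V) : (t : ℕ) → SimpleGraph (ILTV V t)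
  | 0 => G
  | t + 1 => ILTstep (ILTG G t)

instance ILTVFintype [Fintype V] : ∀ t, Fintype (ILTV V t)
  | 0 => inferInstanceAs (Fintype V)
  | t + 1 => letI := ILTVFintype t
             inferInstanceAs (Fintype (ILTV V t ⊕ ILTV V t))

instance ILTVDecEq [DecidableEq V] : ∀ t, DecidableEq (ILTV V t)
  | 0 => inferInstanceAs (DecidableEq V)
  | t + 1 => letI := ILTVDecEq t
             inferInstanceAs (DecidableEq (ILTV V t ⊕ ILTV V t))

instance ILTGDecAdj (G : SimpleGraph V) [DecidableEq V] [DecidableRel G.Adj] :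
    ∀ t, DecidableRel (ILTG G t).Adj
  | 0 => inferInstanceAs (DecidableRel G.Adj)
  | t + 1 => letI : DecidableEq (ILTV V t) := ILTVDecEq t
             letI : DecidableRel (ILTG G t).Adj := ILTGDecAdj G t
             ILTstepDecAdj (ILTG G t)

/-- The volume of a graph: the sum of the degrees of its vertices. -/
def graphVol [Fintype V] (G : SimpleGraph V) [DecidableRel G.Adj] : ℕ :=
  ∑ v, G.degree v

/-- The Wiener index: the sum of distances over unordered pairs of vertices. -/
noncomputable def wienerIndex [Fintype V] (G : SimpleGraph V) : ℕ :=
  (∑ x : V, ∑ y : V, G.dist x y) / 2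


private lemma ILT_lift_walk {G : SimpleGraph V} :
    ∀ {v y : V} (q : G.Walk v y), 1 ≤ q.length →
      ∃ w : (ILTstep G).Walk (Sum.inl v) (Sum.inr y), w.length = q.length := by
  intro v y q
  induction q with
  | nil => simp
  | @cons a b c h q ih =>
    intro _
    cases q with
    | nil =>
      exact ⟨SimpleGraph.Walk.cons (show (ILTstep G).Adj (Sum.inl a) (Sum.inr b) from Or.inr h)
        SimpleGraph.Walk.nil, by simp⟩
    | cons h' q' =>
      obtain ⟨w, hw⟩ := ih (by simp)
      exact ⟨SimpleGraph.Walk.cons (show (ILTstep G).Adj (Sum.inl a) (Sum.inl b) from h) w,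
        by simp [hw]⟩

private lemma ILT_proj_adj {G : SimpleGraph V} {a b : V ⊕ V} (h : (ILTstep G).Adj a b) :
    Sum.elim id id a = Sum.elim id id b ∨ G.Adj (Sum.elim id id a) (Sum.elim id id b) := by
  rcases a with a | a <;> rcases b with b | b
  · exact Or.inr h
  · exact h.imp id id
  · exact h.imp id id
  · exact h.elim

private lemma ILT_proj_dist {G : SimpleGraph V} (hG : G.Connected) :
    ∀ {a b : V ⊕ V} (w : (ILTstep G).Walk a b),
      G.dist (Sum.elim id id a) (Sum.elim id id b) ≤ w.length := by
  intro a b w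
  induction w with
  | nil => simp [SimpleGraph.dist_self]
  | @cons a c b h w ih =>
    have tri := hG.dist_triangle (u := Sum.elim id id a) (v := Sum.elim id id c)
      (w := Sum.elim id id b)
    have h1 : G.dist (Sum.elim id id a) (Sum.elim id id c) ≤ 1 := by
      rcases ILT_proj_adj h with he | ha
      · rw [he]; simp [SimpleGraph.dist_self]
      · exact le_of_eq (SimpleGraph.dist_eq_one_iff_adj.mpr ha)
    calc G.dist (Sum.elim id id a) (Sum.elim id id b) ≤ _ := tri
      _ ≤ 1 + w.length := Nat.add_le_add h1 ih
      _ = (SimpleGraph.Walk.cons h w).length := by simp [Nat.add_comm]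

theorem ILT_dist_clone_clone (G : SimpleGraph V) (hG : G.Connected)
    (x y : V) (hxy : x ≠ y) :
    (¬ G.Adj x y → (ILTstep G).dist (Sum.inr x) (Sum.inr y) = G.dist x y) ∧
    (G.Adj x y →
      (ILTstep G).dist (Sum.inr x) (Sum.inr y) = 2 ∧ G.dist x y + 1 = 2) := by
  constructor
  · intro hna
    have hpos : 0 < G.dist x y := hG.pos_dist_of_ne hxy
    have hne1 : G.dist x y ≠ 1 := fun h1 => hna (SimpleGraph.dist_eq_one_iff_adj.mp h1)
    have h2 : 2 ≤ G.dist x y := by omega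
    obtain ⟨p, hp⟩ := hG.exists_walk_length_eq_dist x y
    rcases p with _ | ⟨h, q⟩
    · simp at hp; exact absurd rfl hxy
    · have hq1 : 1 ≤ q.length := by
        simp only [SimpleGraph.Walk.length_cons] at hp; omega
      obtain ⟨w, hw⟩ := ILT_lift_walk q hq1
      rename_i v
      let W : (ILTstep G).Walk (Sum.inr x) (Sum.inr y) :=
        SimpleGraph.Walk.cons (show (ILTstep G).Adj (Sum.inr x) (Sum.inl v) from Or.inr h) w
      have hWlen : W.length = G.dist x y := by
        show (SimpleGraph.Walk.cons _ w).length = _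
        rw [SimpleGraph.Walk.length_cons, hw]
        simpa using hp
      have hle : (ILTstep G).dist (Sum.inr x) (Sum.inr y) ≤ G.dist x y :=
        hWlen ▸ SimpleGraph.dist_le W
      have hne0 : (ILTstep G).dist (Sum.inr x) (Sum.inr y) ≠ 0 := by
        rw [SimpleGraph.dist_ne_zero_iff_ne_and_reachable]
        exact ⟨fun hc => hxy (Sum.inr.inj hc), ⟨W⟩⟩
      obtain ⟨w', hw'⟩ := SimpleGraph.exists_walk_of_dist_ne_zero hne0
      have hge := ILT_proj_dist hG w'
      simp only [Sum.elim_inr, id] at hge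
      omega
  · intro ha
    let W : (ILTstep G).Walk (Sum.inr x) (Sum.inr y) :=
      SimpleGraph.Walk.cons (show (ILTstep G).Adj (Sum.inr x) (Sum.inl x) from Or.inl rfl)
        (SimpleGraph.Walk.cons (show (ILTstep G).Adj (Sum.inl x) (Sum.inr y) from Or.inr ha)
          SimpleGraph.Walk.nil)
    have hWlen : W.length = 2 := rfl
    have hle : (ILTstep G).dist (Sum.inr x) (Sum.inr y) ≤ 2 :=
      hWlen ▸ SimpleGraph.dist_le W
    have hne0 : (ILTstep G).dist (Sum.inr x) (Sum.inr y) ≠ 0 := by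
      rw [SimpleGraph.dist_ne_zero_iff_ne_and_reachable]
      exact ⟨fun hc => hxy (Sum.inr.inj hc), ⟨W⟩⟩
    have hne1 : (ILTstep G).dist (Sum.inr x) (Sum.inr y) ≠ 1 := by
      intro h1
      exact (SimpleGraph.dist_eq_one_iff_adj.mp h1).elim
    have hd1 : G.dist x y = 1 := SimpleGraph.dist_eq_one_iff_adj.mpr ha
    exact ⟨by omega, by omega⟩
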